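/- Fix 0 < γ < 1, κ ∈ (0,1), d > a₀ > 0, and 𝔮 > 0. Define R(x,t) = ((|x|+d)^γ + k) t^{-(3+κ)/2} for |x| ≥ a₀ and R(x,t) = 0 for |x| < a₀. Then there exist δ ∈ (0,1) and k > 0 such that for all (x,t) with a₀ ≤ |x| ≤ δ t^{1/2} and t ≥ (d/δ)², one has ∂ₜR(x,t) - (J*R - R)(x,t) ≥ (𝔮/8) γ(1-γ) (|x|+d)^{γ-2} t^{-(3+κ)/2}, where J is an even probability kernel supported in (-d,d), nonincreasing on [0,∞), with ∫ J(z) z² dz = 2𝔮. -/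

import Mathlib

open Real MeasureTheory Set

lemma taylor_ineq {γ b d : ℝ} (hγ : 0 < γ) (hγ1 : γ < 1) (hd : 0 < d) (hb : d < b)
    {z : ℝ} (hz : z ∈ Icc (-d) d) :
    (b - z) ^ γ ≤ b ^ γ - γ * b ^ (γ-1) * z - γ * (1-γ) / 2 * (b + d) ^ (γ-2) * z^2 := by
  have hb0 : (0:ℝ) < b := hd.trans hb
  set c : ℝ := γ * (1-γ) * (b + d) ^ (γ-2) with hc
  set G : ℝ → ℝ := fun z => b ^ γ - (b - z) ^ γ - γ * b ^ (γ-1) * z - c/2 * z^2 with hG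
  set G' : ℝ → ℝ := fun z => γ * (b - z) ^ (γ-1) - γ * b ^ (γ-1) - c * z with hG'
  have hbz : ∀ w : ℝ, w ∈ Icc (-d) d → 0 < b - w := by
    intro w hw; have := hw.2; linarith
  have hDG : ∀ w ∈ Icc (-d) d, HasDerivAt G (G' w) w := by
    intro w hw
    have h1 : HasDerivAt (fun z : ℝ => b - z) (-1) w := by
      simpa using (hasDerivAt_id w).const_sub b
    have h2 : HasDerivAt (fun z : ℝ => (b - z) ^ γ) (γ * (b - w) ^ (γ-1) * (-1)) w := by
      have := (Real.hasDerivAt_rpow_const (x := b - w) (p := γ) (Or.inl (hbz w hw).ne'))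
      exact this.comp w h1
    have h3 : HasDerivAt (fun z : ℝ => γ * b ^ (γ-1) * z) (γ * b ^ (γ-1)) w := by
      simpa using (hasDerivAt_id w).const_mul (γ * b ^ (γ-1))
    have h4 : HasDerivAt (fun z : ℝ => c/2 * z^2) (c * w) w := by
      have := ((hasDerivAt_pow 2 w).const_mul (c/2))
      exact this.congr_deriv (by push_cast; ring)
    have := (((hasDerivAt_const w (b ^ γ)).sub h2).sub h3).sub h4
    refine this.congr_deriv ?_
    simp only [G']; ring
  have hDG' : ∀ w ∈ Icc (-d) d, HasDerivAt G' (γ * (1-γ) * (b - w) ^ (γ-2) - c) w := by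
    intro w hw
    have h1 : HasDerivAt (fun z : ℝ => b - z) (-1) w := by
      simpa using (hasDerivAt_id w).const_sub b
    have h2 : HasDerivAt (fun z : ℝ => (b - z) ^ (γ-1)) ((γ-1) * (b - w) ^ (γ-1-1) * (-1)) w :=
      (Real.hasDerivAt_rpow_const (x := b - w) (p := γ-1) (Or.inl (hbz w hw).ne')).comp w h1
    have h3 : HasDerivAt (fun z : ℝ => c * z) c w := by
      simpa using (hasDerivAt_id w).const_mul c
    have := ((h2.const_mul γ).sub (hasDerivAt_const w (γ * b ^ (γ-1)))).sub h3
    refine this.congr_deriv ?_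
    have he : γ - 1 - 1 = γ - 2 := by ring
    rw [he]; ring
  -- G'' ≥ 0 on Icc
  have hG''pos : ∀ w ∈ Icc (-d) d, 0 ≤ γ * (1-γ) * (b - w) ^ (γ-2) - c := by
    intro w hw
    have h1 : (b + d) ^ (γ-2) ≤ (b - w) ^ (γ-2) := by
      apply Real.rpow_le_rpow_of_nonpos (hbz w hw) (by linarith [hw.1]) (by linarith)
    have h2 : 0 < γ * (1-γ) := by nlinarith
    rw [hc]; nlinarith
  -- G' monotone on Icc
  have hmemIcc : ∀ w : ℝ, w ∈ Icc (-d:ℝ) d → w ∈ Icc (-d:ℝ) d := fun w h => h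
  have hG'mono : MonotoneOn G' (Icc (-d) d) := by
    apply monotoneOn_of_deriv_nonneg (convex_Icc _ _)
    · exact fun w hw => (hDG' w hw).continuousAt.continuousWithinAt
    · intro w hw
      rw [interior_Icc] at hw
      exact (hDG' w (Ioo_subset_Icc_self hw)).differentiableAt.differentiableWithinAt
    · intro w hw
      rw [interior_Icc] at hw
      rw [(hDG' w (Ioo_subset_Icc_self hw)).deriv]
      exact hG''pos w (Ioo_subset_Icc_self hw)
  have hG'0 : G' 0 = 0 := by simp [G']
  have h0mem : (0:ℝ) ∈ Icc (-d) d := ⟨by linarith, hd.le⟩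
  have hG0 : G 0 = 0 := by simp [G]
  -- conclude G z ≥ 0
  have key : 0 ≤ G z := by
    rcases le_total 0 z with hz0 | hz0
    · have hmono : MonotoneOn G (Icc 0 d) := by
        apply monotoneOn_of_deriv_nonneg (convex_Icc _ _)
        · intro w hw
          exact (hDG w ⟨by linarith [hw.1], hw.2⟩).continuousAt.continuousWithinAt
        · intro w hw
          rw [interior_Icc] at hw
          exact (hDG w ⟨by linarith [hw.1], hw.2.le⟩).differentiableAt.differentiableWithinAt
        · intro w hw
          rw [interior_Icc] at hw
          have hwI : w ∈ Icc (-d) d := ⟨by linarith [hw.1], hw.2.le⟩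
          rw [(hDG w hwI).deriv, ← hG'0]
          exact hG'mono h0mem hwI hw.1.le
      have := hmono ⟨le_refl 0, hd.le⟩ ⟨hz0, hz.2⟩ hz0
      rwa [hG0] at this
    · have hanti : AntitoneOn G (Icc (-d) 0) := by
        apply antitoneOn_of_deriv_nonpos (convex_Icc _ _)
        · intro w hw
          exact (hDG w ⟨hw.1, by linarith [hw.2]⟩).continuousAt.continuousWithinAt
        · intro w hw
          rw [interior_Icc] at hw
          exact (hDG w ⟨hw.1.le, by linarith [hw.2]⟩).differentiableAt.differentiableWithinAt
        · intro w hw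
          rw [interior_Icc] at hw
          have hwI : w ∈ Icc (-d) d := ⟨hw.1.le, by linarith [hw.2]⟩
          rw [(hDG w hwI).deriv, ← hG'0]
          exact hG'mono hwI h0mem hw.2.le
      have := hanti ⟨hz.1, hz0⟩ ⟨by linarith, le_refl 0⟩ hz0
      rwa [hG0] at this
  have : G z = b ^ γ - (b - z) ^ γ - γ * b ^ (γ-1) * z - c/2 * z^2 := rfl
  rw [this] at key
  rw [hc] at key
  linarith


lemma key_spatial (J : ℝ → ℝ) (d a₀ q γ k : ℝ)
    (hJpos : ∀ x, 0 ≤ J x) (hJeven : ∀ x, J (-x) = J x)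
    (hJsupp : ∀ x, d ≤ |x| → J x = 0)
    (hJint : ∫ x, J x = 1)
    (hJmono : AntitoneOn J (Set.Ici 0))
    (hq : ∫ z, J z * z ^ 2 = 2 * q)
    (ha₀ : 0 < a₀) (hd : a₀ < d)
    (hγ : 0 < γ) (hγ1 : γ < 1)
    (hk : k = (2*d) ^ γ * d / a₀)
    (x : ℝ) (hx : a₀ ≤ x) :
    ∫ z, J z * (if |x - z| < a₀ then 0 else (|x - z| + d) ^ γ + k) ≤
      ((x + d) ^ γ + k) - q * γ * (1-γ) * (x + 2*d) ^ (γ-2) := by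
  have hd0 : 0 < d := ha₀.trans hd
  have hx0 : 0 < x := lt_of_lt_of_le ha₀ hx
  have hk0 : 0 < k := by rw [hk]; positivity
  have hJ : Integrable J := by
    by_contra h; rw [integral_undef h] at hJint; norm_num at hJint
  have hJm : AEStronglyMeasurable J volume := hJ.1
  set φ : ℝ → ℝ := fun z => if |x - z| < a₀ then 0 else (|x - z| + d) ^ γ + k with hφ
  have hφm : Measurable φ := by
    have hc : Continuous fun z : ℝ => |x - z| := (continuous_const.sub continuous_id).abs
    apply Measurable.ite
    · exact (isOpen_lt hc continuous_const).measurableSet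
    · exact measurable_const
    · exact (((hc.add continuous_const).rpow_const (fun z => Or.inr hγ.le)).add
        continuous_const).measurable
  have hφnonneg : ∀ z, 0 ≤ φ z := by
    intro z; rw [hφ]; dsimp only
    split
    · exact le_rfl
    · positivity
  have hφbdd : ∀ z, |z| < d → φ z ≤ (x + 2*d) ^ γ + k := by
    intro z hz
    rw [hφ]; dsimp only
    split
    · positivity
    · have h1 : |x - z| + d ≤ x + 2*d := by
        have h2 : |x - z| ≤ |x| + |z| := abs_sub x z
        rw [abs_of_pos hx0] at h2
        linarith
      have := Real.rpow_le_rpow (by positivity) h1 hγ.le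
      linarith
  -- integrability facts
  have intJφ : Integrable (fun z => J z * φ z) := by
    apply Integrable.mono' (hJ.const_mul ((x + 2*d) ^ γ + k))
      ((hJm.mul hφm.aestronglyMeasurable :
        AEStronglyMeasurable (fun z => J z * φ z) volume))
    filter_upwards with z
    simp only [Pi.mul_apply, Real.norm_eq_abs, abs_mul]
    rw [abs_of_nonneg (hJpos z), abs_of_nonneg (hφnonneg z)]
    by_cases hz : d ≤ |z|
    · simp [hJsupp z hz]
    · push_neg at hz
      rw [mul_comm ((x + 2*d) ^ γ + k) (J z)]
      exact mul_le_mul_of_nonneg_left (hφbdd z hz) (hJpos z)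
  have hpowm : AEStronglyMeasurable (fun z : ℝ => (x + d - z) ^ γ) volume :=
    ((continuous_const.sub continuous_id).rpow_const
      (fun z => Or.inr hγ.le)).measurable.aestronglyMeasurable
  have intJpow : Integrable (fun z => J z * (x + d - z) ^ γ) := by
    apply Integrable.mono' (hJ.const_mul ((x + 2*d) ^ γ))
      ((hJm.mul hpowm : AEStronglyMeasurable (fun z => J z * (x + d - z) ^ γ) volume))
    filter_upwards with z
    simp only [Pi.mul_apply, Real.norm_eq_abs, abs_mul]
    rw [abs_of_nonneg (hJpos z)]
    by_cases hz : d ≤ |z|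
    · simp [hJsupp z hz]
    · push_neg at hz
      have hz' := abs_lt.mp hz
      have hb : (0:ℝ) ≤ x + d - z := by linarith
      rw [abs_of_nonneg (Real.rpow_nonneg hb γ), mul_comm ((x + 2*d) ^ γ) (J z)]
      exact mul_le_mul_of_nonneg_left
        (Real.rpow_le_rpow hb (by linarith) hγ.le) (hJpos z)
  have intJz : Integrable (fun z => J z * z) := by
    apply Integrable.mono' (hJ.const_mul d)
      ((hJm.mul measurable_id.aestronglyMeasurable :
        AEStronglyMeasurable (fun z => J z * z) volume))
    filter_upwards with z
    simp only [Pi.mul_apply, Real.norm_eq_abs, abs_mul]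
    rw [abs_of_nonneg (hJpos z)]
    by_cases hz : d ≤ |z|
    · simp [hJsupp z hz]
    · push_neg at hz
      rw [mul_comm d (J z)]
      exact mul_le_mul_of_nonneg_left hz.le (hJpos z)
  have intJz2 : Integrable (fun z => J z * z ^ 2) := by
    apply Integrable.mono' (hJ.const_mul (d ^ 2))
      ((hJm.mul (measurable_id.pow_const 2).aestronglyMeasurable :
        AEStronglyMeasurable (fun z => J z * z ^ 2) volume))
    filter_upwards with z
    simp only [Pi.mul_apply, Real.norm_eq_abs, abs_mul]
    rw [abs_of_nonneg (hJpos z)]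
    by_cases hz : d ≤ |z|
    · simp [hJsupp z hz]
    · push_neg at hz
      rw [mul_comm (d ^ 2) (J z), abs_of_nonneg (sq_nonneg z)]
      have : z ^ 2 ≤ d ^ 2 := by
        rw [← sq_abs]; exact pow_le_pow_left₀ (abs_nonneg z) hz.le 2
      exact mul_le_mul_of_nonneg_left this (hJpos z)
  -- odd moment vanishes
  have hmom1 : ∫ z, J z * z = 0 := by
    have h1 : ∫ z, J z * z = ∫ z, J (-z) * (-z) :=
      (integral_neg_eq_self (fun z => J z * z) volume).symm
    have h2 : ∀ z : ℝ, J (-z) * (-z) = -(J z * z) := by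
      intro z; rw [hJeven]; ring
    simp_rw [h2, integral_neg] at h1
    linarith
  -- Taylor bound
  set c1 : ℝ := γ * (x + d) ^ (γ-1) with hc1
  set c2 : ℝ := γ * (1-γ) / 2 * (x + 2*d) ^ (γ-2) with hc2
  have taylor_int : ∫ z, J z * (x + d - z) ^ γ ≤
      (x + d) ^ γ - q * γ * (1-γ) * (x + 2*d) ^ (γ-2) := by
    have i1 : Integrable (fun z => (x + d) ^ γ * J z - c1 * (J z * z)) :=
      (hJ.const_mul _).sub (intJz.const_mul _)
    have i2 : Integrable (fun z => (x + d) ^ γ * J z - c1 * (J z * z) - c2 * (J z * z ^ 2)) :=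
      i1.sub (intJz2.const_mul _)
    have hpt : ∀ z, J z * (x + d - z) ^ γ ≤
        (x + d) ^ γ * J z - c1 * (J z * z) - c2 * (J z * z ^ 2) := by
      intro z
      by_cases hz : d ≤ |z|
      · simp [hJsupp z hz]
      · push_neg at hz
        have hz' := abs_lt.mp hz
        have ht := taylor_ineq hγ hγ1 hd0 (show d < x + d by linarith)
          (z := z) ⟨hz'.1.le, hz'.2.le⟩
        have h2d : x + d + d = x + 2*d := by ring
        rw [h2d] at ht
        have hres := mul_le_mul_of_nonneg_left ht (hJpos z)
        rw [hc1, hc2]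
        linarith [hres]
    have e1 : ∫ z, ((x + d) ^ γ * J z - c1 * (J z * z) - c2 * (J z * z ^ 2)) =
        (∫ z, ((x + d) ^ γ * J z - c1 * (J z * z))) - ∫ z, c2 * (J z * z ^ 2) :=
      integral_sub i1 (intJz2.const_mul _)
    have e2 : ∫ z, ((x + d) ^ γ * J z - c1 * (J z * z)) =
        (∫ z, (x + d) ^ γ * J z) - ∫ z, c1 * (J z * z) :=
      integral_sub (hJ.const_mul _) (intJz.const_mul _)
    have e3 : ∫ z, (x + d) ^ γ * J z = (x + d) ^ γ * ∫ z, J z := integral_const_mul _ _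
    have e4 : ∫ z, c1 * (J z * z) = c1 * ∫ z, J z * z := integral_const_mul _ _
    have e5 : ∫ z, c2 * (J z * z ^ 2) = c2 * ∫ z, J z * z ^ 2 := integral_const_mul _ _
    have := integral_mono intJpow i2 hpt
    rw [e1, e2, e3, e4, e5, hJint, hmom1, hq, hc2] at this
    calc ∫ z, J z * (x + d - z) ^ γ
        ≤ (x + d) ^ γ * 1 - c1 * 0 - γ * (1-γ) / 2 * (x + 2*d) ^ (γ-2) * (2*q) := this
      _ = (x + d) ^ γ - q * γ * (1-γ) * (x + 2*d) ^ (γ-2) := by ring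
  -- monotonicity bounds on tail and near-field mass
  have hJx0 : 0 ≤ J x := hJpos x
  have hIci : ∫ z in Ici x, J z ≤ d * J x := by
    by_cases hxd : x < d
    · rw [← Ico_union_Ici_eq_Ici hxd.le,
        setIntegral_union (by
          rw [Set.disjoint_left]; intro z hz hz'
          exact absurd hz'.out (not_le.mpr hz.2))
          measurableSet_Ici hJ.integrableOn hJ.integrableOn]
      have h1 : ∫ z in Ici d, J z = 0 := by
        rw [setIntegral_congr_fun measurableSet_Ici
          (fun z hz => hJsupp z (le_abs.mpr (Or.inl hz.out)))]
        exact integral_zero _ _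
      have h2 : ∫ z in Ico x d, J z ≤ ∫ _z in Ico x d, J x := by
        apply setIntegral_mono_on hJ.integrableOn
          ((integrableOn_const_iff).mpr (Or.inr (by rw [Real.volume_Ico]; exact ENNReal.ofReal_lt_top)))
          measurableSet_Ico
        intro z hz
        exact hJmono (mem_Ici.mpr hx0.le) (mem_Ici.mpr (hx0.le.trans hz.1)) hz.1
      have h3 : ∫ _z in Ico x d, J x = (d - x) * J x := by
        rw [setIntegral_const, Real.volume_real_Ico_of_le (by linarith), smul_eq_mul]
      rw [h1]
      rw [h3] at h2
      nlinarith
    · push_neg at hxd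
      have h1 : ∫ z in Ici x, J z = 0 := by
        rw [setIntegral_congr_fun measurableSet_Ici
          (fun z hz => hJsupp z (le_abs.mpr (Or.inl (hxd.trans hz.out))))]
        exact integral_zero _ _
      rw [h1]; positivity
  have hIoo : a₀ * J x ≤ ∫ z in Ioo (x - a₀) (x + a₀), J z := by
    have hsub : Ioc (x - a₀) x ⊆ Ioo (x - a₀) (x + a₀) := by
      intro z hz; exact ⟨hz.1, lt_of_le_of_lt hz.2 (by linarith)⟩
    have h0 : a₀ * J x ≤ ∫ z in Ioc (x - a₀) x, J z := by
      have h2 : ∫ _z in Ioc (x - a₀) x, J x ≤ ∫ z in Ioc (x - a₀) x, J z := by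
        apply setIntegral_mono_on
          ((integrableOn_const_iff).mpr (Or.inr (by rw [Real.volume_Ioc]; exact ENNReal.ofReal_lt_top)))
          hJ.integrableOn measurableSet_Ioc
        intro z hz
        exact hJmono (mem_Ici.mpr (by linarith [hz.1, hx])) (mem_Ici.mpr hx0.le) hz.2
      have h3 : ∫ _z in Ioc (x - a₀) x, J x = a₀ * J x := by
        rw [setIntegral_const, Real.volume_real_Ioc_of_le (by linarith), smul_eq_mul]
        ring_nf
      linarith
    refine h0.trans (setIntegral_mono_set hJ.integrableOn ?_ ?_)
    · filter_upwards with z; exact hJpos z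
    · exact HasSubset.Subset.eventuallyLE hsub
  -- the comparison function h
  have int_ind1 : Integrable ((Ici x).indicator J) := hJ.indicator measurableSet_Ici
  have int_ind2 : Integrable ((Ioo (x - a₀) (x + a₀)).indicator J) :=
    hJ.indicator measurableSet_Ioo
  have i3 : Integrable (fun z => J z * (x + d - z) ^ γ + k * J z) :=
    intJpow.add (hJ.const_mul k)
  have i4 : Integrable (fun z => J z * (x + d - z) ^ γ + k * J z
      + (2*d) ^ γ * (Ici x).indicator J z) := i3.add (int_ind1.const_mul _)
  have inth : Integrable (fun z => J z * (x + d - z) ^ γ + k * J z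
      + (2*d) ^ γ * (Ici x).indicator J z
      - k * (Ioo (x - a₀) (x + a₀)).indicator J z) := i4.sub (int_ind2.const_mul _)
  have claimP : ∀ z, J z * φ z ≤ J z * (x + d - z) ^ γ + k * J z
      + (2*d) ^ γ * (Ici x).indicator J z
      - k * (Ioo (x - a₀) (x + a₀)).indicator J z := by
    intro z
    rw [Set.indicator_apply, Set.indicator_apply]
    by_cases hz : d ≤ |z|
    · have hJz : J z = 0 := hJsupp z hz
      simp [hJz]
    · push_neg at hz
      have hz' := abs_lt.mp hz
      have hJz := hJpos z
      have hb1 : (0:ℝ) ≤ x + d - z := by linarith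
      have hb1' : (0:ℝ) ≤ (x + d - z) ^ γ := Real.rpow_nonneg hb1 γ
      rw [hφ]; dsimp only
      by_cases hcase : |x - z| < a₀
      · rw [if_pos hcase]
        have habs := abs_lt.mp hcase
        have hio : z ∈ Ioo (x - a₀) (x + a₀) := by
          constructor <;> [linarith [habs.2]; linarith [habs.1]]
        rw [if_pos hio]
        have hind : (0:ℝ) ≤ if z ∈ Ici x then J z else 0 := by
          split
          · exact hJz
          · exact le_rfl
        have h2d0 : (0:ℝ) ≤ (2*d) ^ γ := Real.rpow_nonneg (by linarith) γ
        linarith [mul_nonneg hJz hb1', mul_nonneg h2d0 hind]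
      · rw [if_neg hcase]
        push_neg at hcase
        have hio : z ∉ Ioo (x - a₀) (x + a₀) := by
          intro hmem
          apply absurd hcase
          push_neg
          rw [abs_lt]
          constructor <;> [linarith [hmem.2]; linarith [hmem.1]]
        rw [if_neg hio]
        rcases le_abs'.mp hcase with hca | hca
        · -- a₀ ≤ -(x - z), i.e. z ≥ x + a₀
          have hzx : x ≤ z := by linarith
          rw [if_pos (mem_Ici.mpr hzx), abs_of_nonpos (by linarith : x - z ≤ 0)]
          have hbase : (0:ℝ) ≤ -(x - z) + d := by linarith
          have hle : -(x - z) + d ≤ 2*d := by linarith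
          have hr := Real.rpow_le_rpow hbase hle hγ.le
          linarith [mul_nonneg hJz hb1', mul_le_mul_of_nonneg_left hr hJz]
        · -- a₀ ≤ x - z, z < x
          have hzx : z ∉ Ici x := by
            rw [mem_Ici]; push_neg; linarith
          rw [if_neg hzx, abs_of_nonneg (by linarith : (0:ℝ) ≤ x - z)]
          have : x - z + d = x + d - z := by ring
          rw [this]
          linarith
  have hmain := integral_mono intJφ inth claimP
  have e1 : ∫ z, (J z * (x + d - z) ^ γ + k * J z
      + (2*d) ^ γ * (Ici x).indicator J z
      - k * (Ioo (x - a₀) (x + a₀)).indicator J z) =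
      (∫ z, (J z * (x + d - z) ^ γ + k * J z + (2*d) ^ γ * (Ici x).indicator J z))
      - ∫ z, k * (Ioo (x - a₀) (x + a₀)).indicator J z :=
    integral_sub i4 (int_ind2.const_mul _)
  have e2 : ∫ z, (J z * (x + d - z) ^ γ + k * J z + (2*d) ^ γ * (Ici x).indicator J z) =
      (∫ z, (J z * (x + d - z) ^ γ + k * J z)) + ∫ z, (2*d) ^ γ * (Ici x).indicator J z :=
    integral_add i3 (int_ind1.const_mul _)
  have e3 : ∫ z, (J z * (x + d - z) ^ γ + k * J z) =
      (∫ z, J z * (x + d - z) ^ γ) + ∫ z, k * J z :=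
    integral_add intJpow (hJ.const_mul _)
  have e4 : ∫ z, k * J z = k * ∫ z, J z := integral_const_mul _ _
  have e5 : ∫ z, (2*d) ^ γ * (Ici x).indicator J z
      = (2*d) ^ γ * ∫ z, (Ici x).indicator J z := integral_const_mul _ _
  have e6 : ∫ z, k * (Ioo (x - a₀) (x + a₀)).indicator J z
      = k * ∫ z, (Ioo (x - a₀) (x + a₀)).indicator J z := integral_const_mul _ _
  have e7 : ∫ z, (Ici x).indicator J z = ∫ z in Ici x, J z :=
    integral_indicator measurableSet_Ici
  have e8 : ∫ z, (Ioo (x - a₀) (x + a₀)).indicator J z = ∫ z in Ioo (x - a₀) (x + a₀), J z :=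
    integral_indicator measurableSet_Ioo
  rw [e1, e2, e3, e4, e5, e6, e7, e8, hJint, mul_one] at hmain
  have hka : k * a₀ = (2*d) ^ γ * d := by
    rw [hk]; field_simp
  have h2d0 : (0:ℝ) ≤ (2*d) ^ γ := Real.rpow_nonneg (by linarith) γ
  have t1 : (2*d) ^ γ * (∫ z in Ici x, J z) ≤ (2*d) ^ γ * (d * J x) :=
    mul_le_mul_of_nonneg_left hIci h2d0
  have t2 : k * (a₀ * J x) ≤ k * (∫ z in Ioo (x - a₀) (x + a₀), J z) :=
    mul_le_mul_of_nonneg_left hIoo hk0.le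
  have hka' : k * (a₀ * J x) = (2*d) ^ γ * (d * J x) := by
    have : k * (a₀ * J x) = (k * a₀) * J x := by ring
    rw [this, hka]; ring
  have htail : (2*d) ^ γ * (∫ z in Ici x, J z)
      - k * (∫ z in Ioo (x - a₀) (x + a₀), J z) ≤ 0 := by
    linarith [t1, t2, hka']
  linarith [hmain, taylor_int, htail]

theorem correction_supersolution
    (J : ℝ → ℝ) (d a₀ q γ κ : ℝ)
    (hJpos : ∀ x, 0 ≤ J x) (hJeven : ∀ x, J (-x) = J x)
    (hJsupp : ∀ x, d ≤ |x| → J x = 0)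
    (hJint : ∫ x, J x = 1)
    (hJmono : AntitoneOn J (Set.Ici 0))
    (hq : ∫ z, J z * z ^ 2 = 2 * q) (hqpos : 0 < q)
    (ha₀ : 0 < a₀) (hd : a₀ < d)
    (hγ : 0 < γ) (hγ1 : γ < 1) (hκ : 0 < κ) (hκ1 : κ < 1) :
    ∃ δ : ℝ, ∃ k : ℝ, 0 < δ ∧ δ < 1 ∧ 0 < k ∧
      ∀ x t : ℝ, a₀ ≤ |x| → |x| ≤ δ * Real.sqrt t → (d / δ) ^ 2 ≤ t →
        let R : ℝ → ℝ → ℝ := fun x' t' =>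
          if |x'| < a₀ then 0 else ((|x'| + d) ^ γ + k) * t' ^ (-((3 + κ)/2) : ℝ)
        (q / 8) * γ * (1 - γ) * (|x| + d) ^ (γ - 2) * t ^ (-((3 + κ)/2) : ℝ) ≤
          deriv (fun s => R x s) t - ((∫ y, J (x - y) * R y t) - R x t) := by
  have hd0 : 0 < d := ha₀.trans hd
  set p : ℝ := (3 + κ)/2 with hp
  have hp0 : 0 < p := by rw [hp]; linarith
  set k : ℝ := (2*d) ^ γ * d / a₀ with hk
  have hk0 : 0 < k := by rw [hk]; positivity
  set M : ℝ := q * γ * (1-γ) * a₀ / (32 * p * (a₀ + d)) with hM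
  have hM0 : 0 < M := by
    rw [hM]
    have h1 : 0 < 1 - γ := by linarith
    positivity
  set δ : ℝ := min (1/2) (Real.sqrt M) with hδ
  have hδ0 : 0 < δ := lt_min (by norm_num) (Real.sqrt_pos.mpr hM0)
  have hδhalf : δ ≤ 1/2 := min_le_left _ _
  have hδ1 : δ < 1 := lt_of_le_of_lt hδhalf (by norm_num)
  have hδM : δ ^ 2 ≤ M := by
    have h1 : δ ≤ Real.sqrt M := min_le_right _ _
    calc δ ^ 2 ≤ Real.sqrt M ^ 2 := pow_le_pow_left₀ hδ0.le h1 2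
      _ = M := Real.sq_sqrt hM0.le
  refine ⟨δ, k, hδ0, hδ1, hk0, ?_⟩
  intro x t hax hxt htt
  intro R
  have ht0 : 0 < t := lt_of_lt_of_le (by positivity) htt
  have hsqt : d / δ ≤ Real.sqrt t := by
    rw [Real.le_sqrt (by positivity) ht0.le]
    exact htt
  have hdδ : d ≤ δ * Real.sqrt t := by
    rw [div_le_iff₀ hδ0] at hsqt; linarith
  have hs0 : 0 < |x| := lt_of_lt_of_le ha₀ hax
  have hsd0 : (0:ℝ) < |x| + d := by linarith
  have hnot : ¬ (|x| < a₀) := not_lt.mpr hax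
  -- the spatial profile
  set φ : ℝ → ℝ := fun y => if |y| < a₀ then 0 else (|y| + d) ^ γ + k with hφ
  -- derivative computation
  have hfun : (fun s => R x s) = fun s : ℝ => ((|x| + d) ^ γ + k) * s ^ (-p) := by
    funext s
    show (if |x| < a₀ then 0 else ((|x| + d) ^ γ + k) * s ^ (-p)) = _
    rw [if_neg hnot]
  have hD : deriv (fun s => R x s) t = ((|x| + d) ^ γ + k) * (-p * t ^ (-p - 1)) := by
    rw [hfun]
    exact ((Real.hasDerivAt_rpow_const (p := -p) (Or.inl ht0.ne')).const_mul
      ((|x| + d) ^ γ + k)).deriv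
  have hRx : R x t = ((|x| + d) ^ γ + k) * t ^ (-p) := by
    show (if |x| < a₀ then 0 else ((|x| + d) ^ γ + k) * t ^ (-p)) = _
    rw [if_neg hnot]
  -- integral transformations
  have hconv1 : (∫ y, J (x - y) * R y t) = (∫ y, J (x - y) * φ y) * t ^ (-p) := by
    rw [← integral_mul_const]
    congr 1
    funext y
    show J (x - y) * (if |y| < a₀ then 0 else ((|y| + d) ^ γ + k) * t ^ (-p))
      = J (x - y) * φ y * t ^ (-p)
    rw [hφ]
    dsimp only
    split
    · ring
    · ring
  have hconv2 : (∫ y, J (x - y) * φ y) = ∫ z, J z * φ (x - z) := by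
    have he : (fun y => J (x - y) * φ y) = fun y => (fun z => J z * φ (x - z)) (x - y) := by
      funext y
      simp [sub_sub_cancel]
    rw [he]
    exact integral_sub_left_eq_self (fun z => J z * φ (x - z)) volume x
  have hφeven : ∀ w : ℝ, φ (-w) = φ w := by
    intro w
    rw [hφ]
    dsimp only
    rw [abs_neg]
  have hconv3 : (∫ z, J z * φ (x - z)) = ∫ z, J z * φ (|x| - z) := by
    rcases abs_cases x with ⟨hxx, _⟩ | ⟨hxx, _⟩
    · rw [hxx]
    · rw [hxx]
      have he : (fun z => J z * φ (-x - z)) = fun z => (fun w => J w * φ (x - w)) (-z) := by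
        funext z
        show J z * φ (-x - z) = J (-z) * φ (x - -z)
        rw [hJeven]
        congr 1
        rw [show x - -z = -(-x - z) by ring, hφeven]
      rw [he]
      exact (integral_neg_eq_self (fun w => J w * φ (x - w)) volume).symm
  have hB : ∫ z, J z * φ (|x| - z) ≤
      ((|x| + d) ^ γ + k) - q * γ * (1-γ) * (|x| + 2*d) ^ (γ-2) :=
    key_spatial J d a₀ q γ k hJpos hJeven hJsupp hJint hJmono hq ha₀ hd hγ hγ1 hk |x| hax
  -- time-term bound
  set u : ℝ := 2 * δ * Real.sqrt t with hu
  have hu0 : 0 < u := by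
    rw [hu]; positivity
  have hu2d : 2*d ≤ u := by rw [hu]; linarith
  have hsu : |x| + d ≤ u := by rw [hu]; linarith
  have hCu : (|x| + d) ^ γ + k ≤ u ^ γ * ((a₀ + d)/a₀) := by
    have h1 : (|x| + d) ^ γ ≤ u ^ γ := Real.rpow_le_rpow hsd0.le hsu hγ.le
    have h2 : (2*d) ^ γ ≤ u ^ γ := Real.rpow_le_rpow (by linarith) hu2d hγ.le
    have h3 : k ≤ u ^ γ * d / a₀ := by
      rw [hk]
      gcongr
    have h4 : u ^ γ * ((a₀ + d)/a₀) = u ^ γ + u ^ γ * d / a₀ := by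
      field_simp
    linarith
  have hueq : u ^ 2 = 4 * δ^2 * t := by
    rw [hu, mul_pow, mul_pow, Real.sq_sqrt ht0.le]
    ring
  have huγ2 : u ^ (γ - 2:ℝ) = u ^ γ / u ^ 2 := by
    rw [show (γ - 2 : ℝ) = γ - ((2:ℕ):ℝ) by norm_num, Real.rpow_sub hu0, Real.rpow_natCast]
  have hdδ0 : δ ≠ 0 := ne_of_gt hδ0
  have hXnn : (0:ℝ) ≤ (|x| + d) ^ (γ-2:ℝ) := Real.rpow_nonneg hsd0.le _
  have key_t : p * ((|x| + d) ^ γ + k) / t ≤ q/8 * γ * (1-γ) * (|x| + d) ^ (γ-2) := by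
    have A1 : p * ((|x| + d) ^ γ + k) / t ≤ p * (u ^ γ * ((a₀ + d)/a₀)) / t :=
      (div_le_div_iff_of_pos_right ht0).mpr (mul_le_mul_of_nonneg_left hCu hp0.le)
    have A2 : p * (u ^ γ * ((a₀ + d)/a₀)) / t = (4*p*δ^2*(a₀+d)/a₀) * u ^ (γ - 2:ℝ) := by
      rw [huγ2]
      have ht_eq : t = u^2 / (4*δ^2) := by
        rw [hueq]
        field_simp
      rw [ht_eq]
      rw [div_div_eq_mul_div]
      field_simp
    have A3 : (4*p*δ^2*(a₀+d)/a₀) ≤ q * γ * (1-γ) / 8 := by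
      have hMeq : 4*p*M*(a₀+d)/a₀ = q * γ * (1-γ) / 8 := by
        rw [hM]
        field_simp
        ring
      have h1 : 4*p*δ^2*(a₀+d)/a₀ ≤ 4*p*M*(a₀+d)/a₀ := by
        gcongr
      linarith
    have A4 : u ^ (γ - 2:ℝ) ≤ (|x| + d) ^ (γ-2:ℝ) :=
      Real.rpow_le_rpow_of_nonpos hsd0 hsu (by linarith)
    have A5 : (0:ℝ) ≤ u ^ (γ - 2:ℝ) := Real.rpow_nonneg hu0.le _
    calc p * ((|x| + d) ^ γ + k) / t ≤ (4*p*δ^2*(a₀+d)/a₀) * u ^ (γ - 2:ℝ) := by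
          rw [← A2]; exact A1
      _ ≤ (q * γ * (1-γ) / 8) * ((|x| + d) ^ (γ-2:ℝ)) := by
          have h1γ : (0:ℝ) < 1 - γ := by linarith
          apply mul_le_mul A3 A4 A5 (by positivity)
      _ = q/8 * γ * (1-γ) * (|x| + d) ^ (γ-2) := by ring
  -- the factor-4 comparison
  have hmid : (1/4:ℝ) * (|x| + d) ^ (γ-2:ℝ) ≤ (|x| + 2*d) ^ (γ-2:ℝ) := by
    have h1 : (2*(|x| + d)) ^ (γ-2:ℝ) ≤ (|x| + 2*d) ^ (γ-2:ℝ) :=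
      Real.rpow_le_rpow_of_nonpos (by linarith) (by linarith) (by linarith)
    have h2 : (2*(|x| + d)) ^ (γ-2:ℝ) = (2:ℝ) ^ (γ-2:ℝ) * (|x| + d) ^ (γ-2:ℝ) :=
      Real.mul_rpow (by norm_num) hsd0.le
    have h3 : (1/4:ℝ) ≤ (2:ℝ) ^ (γ-2:ℝ) := by
      have h4 : ((1:ℝ)/4) = (2:ℝ) ^ (-2:ℝ) := by
        rw [show (-2:ℝ) = ((-2:ℤ):ℝ) by norm_num, Real.rpow_intCast]
        norm_num
      rw [h4]
      exact Real.rpow_le_rpow_of_exponent_le one_le_two (by linarith)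
    have h5 := mul_le_mul_of_nonneg_right h3 hXnn
    linarith
  -- final assembly
  rw [hD, hconv1, hconv2, hconv3, hRx]
  have hexp : t ^ (-p - 1:ℝ) = t ^ (-p:ℝ) / t := by
    rw [show (-p - 1:ℝ) = -p - 1 from rfl, Real.rpow_sub ht0, Real.rpow_one]
  rw [hexp]
  have htp0 : 0 < t ^ (-p:ℝ) := Real.rpow_pos_of_pos ht0 _
  set B : ℝ := ∫ z, J z * φ (|x| - z) with hBdef
  set C : ℝ := (|x| + d) ^ γ + k with hCdef
  have hq4 : q * γ * (1-γ) * ((1/4:ℝ) * (|x| + d) ^ (γ-2:ℝ))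
      ≤ q * γ * (1-γ) * ((|x| + 2*d) ^ (γ-2:ℝ)) := by
    apply mul_le_mul_of_nonneg_left hmid
    have : 0 < 1 - γ := by linarith
    positivity
  have hfinal : q/8 * γ * (1-γ) * (|x| + d) ^ (γ-2:ℝ) ≤ (C - B) - p * C / t := by
    have h1 : q * γ * (1-γ) * ((|x| + 2*d) ^ (γ-2:ℝ)) ≤ C - B := by linarith [hB]
    linarith [key_t, hq4, h1]
  have hmul := mul_le_mul_of_nonneg_right hfinal htp0.le
  have hrhs_eq : C * (-p * (t ^ (-p:ℝ) / t)) - (B * t ^ (-p:ℝ) - C * t ^ (-p:ℝ))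
      = ((C - B) - p * C / t) * t ^ (-p:ℝ) := by
    field_simp
    ring
  linarith [hmul, hrhs_eq.ge, hrhs_eq.le]
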